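/- There exists a finite unital ring R that is non-commutative, not alternative (i.e., it fails one of the identities (a,a,b) = 0, (a,b,b) = 0), and centrally essential. -/

import Mathlib

set_option linter.unusedSectionVars false

/-- The associator `(a,b,c) = (ab)c - a(bc)` in a not necessarily associative ring. -/
def naAssociator {R : Type*} [NonAssocRing R] (a b c : R) : R := a * b * c - a * (b * c)

/-- The commutator `[a,b] = ab - ba` in a not necessarily associative ring. -/
def naCommutator {R : Type*} [NonAssocRing R] (a b : R) : R := a * b - b * a

/-- The associative center `N(R)`. -/
def assocCenter (R : Type*) [NonAssocRing R] : Set R :=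
  {x | ∀ a b : R, naAssociator x a b = 0 ∧ naAssociator a x b = 0 ∧ naAssociator a b x = 0}

/-- The commutative center `K(R)`. -/
def commCenter (R : Type*) [NonAssocRing R] : Set R :=
  {x | ∀ a : R, naCommutator x a = 0}

/-- The center `Z(R) = N(R) ∩ K(R)`. -/
def ringCenter (R : Type*) [NonAssocRing R] : Set R :=
  assocCenter R ∩ commCenter R

/-- A ring is centrally essential if for every nonzero `r` there is a central `z`
with `z * r ≠ 0` central. -/
def IsCentrallyEssential (R : Type*) [NonAssocRing R] : Prop :=
  ∀ r : R, r ≠ 0 → ∃ z ∈ ringCenter R, z * r ≠ 0 ∧ z * r ∈ ringCenter R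

/-- A ring is left `N`-essential. -/
def IsLeftNEssential (R : Type*) [NonAssocRing R] : Prop :=
  ∀ r : R, r ≠ 0 → ∃ n ∈ assocCenter R, n * r ≠ 0 ∧ n * r ∈ assocCenter R

/-- A ring is right `N`-essential. -/
def IsRightNEssential (R : Type*) [NonAssocRing R] : Prop :=
  ∀ r : R, r ≠ 0 → ∃ n ∈ assocCenter R, r * n ≠ 0 ∧ r * n ∈ assocCenter R

/-- `I` is an essential ideal of `B` (elementwise formulation). -/
def EssentialIn {R : Type*} [NonAssocRing R] (I B : Set R) : Prop :=
  ∀ b ∈ B, b ≠ 0 → ∃ d ∈ B, d * b ≠ 0 ∧ d * b ∈ I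

/-- The Cayley–Dickson ring `(A, α)`: the abelian group `A ⊕ A` with multiplication
`(a₁,a₂)(a₃,a₄) = (a₁a₃ + α(a₄a₂*), a₁*a₄ + a₃a₂)`. -/
@[ext]
structure CD (A : Type*) (α : A) : Type _ where
  re : A
  im : A

namespace CD

variable {A : Type*} [NonAssocRing A] [StarRing A] {α : A}

instance : Zero (CD A α) := ⟨⟨0, 0⟩⟩
instance : Add (CD A α) := ⟨fun z w => ⟨z.re + w.re, z.im + w.im⟩⟩
instance : Neg (CD A α) := ⟨fun z => ⟨-z.re, -z.im⟩⟩
instance : One (CD A α) := ⟨⟨1, 0⟩⟩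
instance : Mul (CD A α) :=
  ⟨fun z w => ⟨z.re * w.re + α * (w.im * star z.im), star z.re * w.im + w.re * z.im⟩⟩
instance : Star (CD A α) := ⟨fun z => ⟨star z.re, -z.im⟩⟩

@[simp] theorem zero_re : (0 : CD A α).re = 0 := rfl
@[simp] theorem zero_im : (0 : CD A α).im = 0 := rfl
@[simp] theorem one_re : (1 : CD A α).re = 1 := rfl
@[simp] theorem one_im : (1 : CD A α).im = 0 := rfl
@[simp] theorem add_re (z w : CD A α) : (z + w).re = z.re + w.re := rfl
@[simp] theorem add_im (z w : CD A α) : (z + w).im = z.im + w.im := rfl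
@[simp] theorem neg_re (z : CD A α) : (-z).re = -z.re := rfl
@[simp] theorem neg_im (z : CD A α) : (-z).im = -z.im := rfl
@[simp] theorem mul_re (z w : CD A α) :
    (z * w).re = z.re * w.re + α * (w.im * star z.im) := rfl
@[simp] theorem mul_im (z w : CD A α) :
    (z * w).im = star z.re * w.im + w.re * z.im := rfl
@[simp] theorem star_re (z : CD A α) : (star z).re = star z.re := rfl
@[simp] theorem star_im (z : CD A α) : (star z).im = -z.im := rfl
@[simp] theorem mk_re (x y : A) : (⟨x, y⟩ : CD A α).re = x := rfl
@[simp] theorem mk_im (x y : A) : (⟨x, y⟩ : CD A α).im = y := rfl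

instance : NonAssocRing (CD A α) where
  add_assoc a b c := by ext <;> simp [add_assoc]
  zero_add a := by ext <;> simp
  add_zero a := by ext <;> simp
  add_comm a b := by ext <;> simp [add_comm]
  neg_add_cancel a := by ext <;> simp
  nsmul := nsmulRec
  zsmul := zsmulRec
  left_distrib a b c := by ext <;> simp [mul_add, add_mul] <;> abel
  right_distrib a b c := by ext <;> simp [mul_add, add_mul, star_add] <;> abel
  zero_mul a := by ext <;> simp
  mul_zero a := by ext <;> simp
  one_mul a := by ext <;> simp
  mul_one a := by ext <;> simp

instance {A : Type*} {α : A} [Finite A] : Finite (CD A α) :=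
  Finite.of_injective (fun z : CD A α => (z.re, z.im))
    (fun z w h => by cases z; cases w; simpa using h)

/-- If `α` commutes with every element and `star α = α`, then `(a,b) ↦ (a*, -b)`
makes `(A, α)` a star ring. -/
def starRing (h : ∀ t : A, α * t = t * α) (hs : star α = α) : StarRing (CD A α) where
  star := star
  star_involutive z := by ext <;> simp
  star_mul z w := by
    ext <;>
      simp [StarMul.star_mul, star_star, StarAddMonoid.star_add, star_neg, hs, h, mul_neg, neg_mul,
        neg_add] <;>
      abel
  star_add z w := by ext <;> simp [StarAddMonoid.star_add, neg_add] <;> abel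

/-- An element of the form `(x, 0)` with `x` commuting with everything and `star x = x`
commutes with every element of `(A, α)`. -/
theorem mk_zero_comm {x : A} (hx : ∀ t : A, x * t = t * x) (hsx : star x = x) (z : CD A α) :
    (⟨x, 0⟩ : CD A α) * z = z * ⟨x, 0⟩ := by
  ext <;> simp [hsx, hx]

end CD

/-! ### A concrete 64-element example -/

@[ext]
structure R6 : Type where
  c0 : ZMod 2
  c1 : ZMod 2
  c2 : ZMod 2
  c3 : ZMod 2
  c4 : ZMod 2
  c5 : ZMod 2
deriving DecidableEq

namespace R6

def equivProd : R6 ≃ (ZMod 2 × ZMod 2 × ZMod 2 × ZMod 2 × ZMod 2 × ZMod 2) where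
  toFun x := (x.c0, x.c1, x.c2, x.c3, x.c4, x.c5)
  invFun p := ⟨p.1, p.2.1, p.2.2.1, p.2.2.2.1, p.2.2.2.2.1, p.2.2.2.2.2⟩
  left_inv x := rfl
  right_inv p := rfl

instance : Fintype R6 := Fintype.ofEquiv _ equivProd.symm

instance : Zero R6 := ⟨⟨0,0,0,0,0,0⟩⟩
instance : One R6 := ⟨⟨1,0,0,0,0,0⟩⟩
instance : Add R6 := ⟨fun x y => ⟨x.c0+y.c0, x.c1+y.c1, x.c2+y.c2, x.c3+y.c3, x.c4+y.c4, x.c5+y.c5⟩⟩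
instance : Neg R6 := ⟨fun x => ⟨-x.c0, -x.c1, -x.c2, -x.c3, -x.c4, -x.c5⟩⟩
instance : Mul R6 := ⟨fun x y =>
  ⟨x.c0*y.c0,
   x.c0*y.c1 + x.c1*y.c0,
   x.c0*y.c2 + x.c2*y.c0,
   x.c0*y.c3 + x.c3*y.c0 + x.c1*y.c2,
   x.c0*y.c4 + x.c4*y.c0 + x.c1*y.c3 + x.c3*y.c1,
   x.c0*y.c5 + x.c5*y.c0 + x.c2*y.c3 + x.c3*y.c2⟩⟩

@[simp] theorem zero_c0 : (0 : R6).c0 = 0 := rfl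
@[simp] theorem zero_c1 : (0 : R6).c1 = 0 := rfl
@[simp] theorem zero_c2 : (0 : R6).c2 = 0 := rfl
@[simp] theorem zero_c3 : (0 : R6).c3 = 0 := rfl
@[simp] theorem zero_c4 : (0 : R6).c4 = 0 := rfl
@[simp] theorem zero_c5 : (0 : R6).c5 = 0 := rfl
@[simp] theorem one_c0 : (1 : R6).c0 = 1 := rfl
@[simp] theorem one_c1 : (1 : R6).c1 = 0 := rfl
@[simp] theorem one_c2 : (1 : R6).c2 = 0 := rfl
@[simp] theorem one_c3 : (1 : R6).c3 = 0 := rfl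
@[simp] theorem one_c4 : (1 : R6).c4 = 0 := rfl
@[simp] theorem one_c5 : (1 : R6).c5 = 0 := rfl
@[simp] theorem add_c0 (x y : R6) : (x + y).c0 = x.c0 + y.c0 := rfl
@[simp] theorem add_c1 (x y : R6) : (x + y).c1 = x.c1 + y.c1 := rfl
@[simp] theorem add_c2 (x y : R6) : (x + y).c2 = x.c2 + y.c2 := rfl
@[simp] theorem add_c3 (x y : R6) : (x + y).c3 = x.c3 + y.c3 := rfl
@[simp] theorem add_c4 (x y : R6) : (x + y).c4 = x.c4 + y.c4 := rfl
@[simp] theorem add_c5 (x y : R6) : (x + y).c5 = x.c5 + y.c5 := rfl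
@[simp] theorem neg_c0 (x : R6) : (-x).c0 = -x.c0 := rfl
@[simp] theorem neg_c1 (x : R6) : (-x).c1 = -x.c1 := rfl
@[simp] theorem neg_c2 (x : R6) : (-x).c2 = -x.c2 := rfl
@[simp] theorem neg_c3 (x : R6) : (-x).c3 = -x.c3 := rfl
@[simp] theorem neg_c4 (x : R6) : (-x).c4 = -x.c4 := rfl
@[simp] theorem neg_c5 (x : R6) : (-x).c5 = -x.c5 := rfl
@[simp] theorem mul_c0 (x y : R6) : (x * y).c0 = x.c0*y.c0 := rfl
@[simp] theorem mul_c1 (x y : R6) : (x * y).c1 = x.c0*y.c1 + x.c1*y.c0 := rfl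
@[simp] theorem mul_c2 (x y : R6) : (x * y).c2 = x.c0*y.c2 + x.c2*y.c0 := rfl
@[simp] theorem mul_c3 (x y : R6) : (x * y).c3 = x.c0*y.c3 + x.c3*y.c0 + x.c1*y.c2 := rfl
@[simp] theorem mul_c4 (x y : R6) : (x * y).c4 = x.c0*y.c4 + x.c4*y.c0 + x.c1*y.c3 + x.c3*y.c1 := rfl
@[simp] theorem mul_c5 (x y : R6) : (x * y).c5 = x.c0*y.c5 + x.c5*y.c0 + x.c2*y.c3 + x.c3*y.c2 := rfl
@[simp] theorem mk_c0 (a b c d e f : ZMod 2) : (⟨a,b,c,d,e,f⟩ : R6).c0 = a := rfl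
@[simp] theorem mk_c1 (a b c d e f : ZMod 2) : (⟨a,b,c,d,e,f⟩ : R6).c1 = b := rfl
@[simp] theorem mk_c2 (a b c d e f : ZMod 2) : (⟨a,b,c,d,e,f⟩ : R6).c2 = c := rfl
@[simp] theorem mk_c3 (a b c d e f : ZMod 2) : (⟨a,b,c,d,e,f⟩ : R6).c3 = d := rfl
@[simp] theorem mk_c4 (a b c d e f : ZMod 2) : (⟨a,b,c,d,e,f⟩ : R6).c4 = e := rfl
@[simp] theorem mk_c5 (a b c d e f : ZMod 2) : (⟨a,b,c,d,e,f⟩ : R6).c5 = f := rfl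

instance : NonAssocRing R6 where
  add_assoc a b c := by ext <;> simp [add_assoc]
  zero_add a := by ext <;> simp
  add_zero a := by ext <;> simp
  add_comm a b := by ext <;> simp [add_comm]
  neg_add_cancel a := by ext <;> exact neg_add_cancel _
  nsmul := nsmulRec
  zsmul := zsmulRec
  left_distrib a b c := by ext <;> simp <;> ring
  right_distrib a b c := by ext <;> simp <;> ring
  zero_mul a := by ext <;> simp
  mul_zero a := by ext <;> simp
  one_mul a := by ext <;> simp
  mul_one a := by ext <;> simp

end R6

namespace R6

@[simp] theorem sub_c0 (x y : R6) : (x - y).c0 = x.c0 - y.c0 := by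
  rw [sub_eq_add_neg, sub_eq_add_neg]; rfl
@[simp] theorem sub_c1 (x y : R6) : (x - y).c1 = x.c1 - y.c1 := by
  rw [sub_eq_add_neg, sub_eq_add_neg]; rfl
@[simp] theorem sub_c2 (x y : R6) : (x - y).c2 = x.c2 - y.c2 := by
  rw [sub_eq_add_neg, sub_eq_add_neg]; rfl
@[simp] theorem sub_c3 (x y : R6) : (x - y).c3 = x.c3 - y.c3 := by
  rw [sub_eq_add_neg, sub_eq_add_neg]; rfl
@[simp] theorem sub_c4 (x y : R6) : (x - y).c4 = x.c4 - y.c4 := by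
  rw [sub_eq_add_neg, sub_eq_add_neg]; rfl
@[simp] theorem sub_c5 (x y : R6) : (x - y).c5 = x.c5 - y.c5 := by
  rw [sub_eq_add_neg, sub_eq_add_neg]; rfl

set_option maxHeartbeats 4000000 in
/-- Every element with vanishing `a`- and `b`-components is central. -/
theorem mem_center (z : R6) (h1 : z.c1 = 0) (h2 : z.c2 = 0) : z ∈ ringCenter R6 := by
  constructor
  · intro a b
    refine ⟨?_, ?_, ?_⟩ <;> (unfold naAssociator; ext <;> simp [h1, h2] <;> ring)
  · intro a
    unfold naCommutator
    ext <;> simp [h1, h2] <;> ring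

end R6

theorem stmt18 :
    ∃ (R : Type) (_ : NonAssocRing R), Finite R ∧
      (¬ ∀ a b : R, a * b = b * a) ∧
      (¬ ∀ a b : R, naAssociator a a b = 0 ∧ naAssociator a b b = 0) ∧
      IsCentrallyEssential R := by
  refine ⟨R6, inferInstance, Finite.of_fintype R6, ?_, ?_, ?_⟩
  · intro h
    have := congrArg R6.c3 (h ⟨0,1,0,0,0,0⟩ ⟨0,0,1,0,0,0⟩)
    simp at this
  · intro h
    have := congrArg R6.c5 (h ⟨0,1,0,0,0,0⟩ ⟨0,0,1,0,0,0⟩).2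
    unfold naAssociator at this
    simp at this
  · intro r hr
    by_cases h1 : r.c1 = 0
    · by_cases h2 : r.c2 = 0
      · exact ⟨1, R6.mem_center 1 rfl rfl, by simpa [one_mul] using hr,
          by simpa [one_mul] using R6.mem_center r h1 h2⟩
      · by_cases h0 : r.c0 = 0
        · refine ⟨⟨0,0,0,1,0,0⟩, R6.mem_center _ rfl rfl, ?_, ?_⟩
          · intro hc
            exact h2 (by simpa [h0] using congrArg R6.c5 hc)
          · exact R6.mem_center _ (by simp) (by simp)
        · refine ⟨⟨0,0,0,0,1,0⟩, R6.mem_center _ rfl rfl, ?_, ?_⟩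
          · intro hc
            exact h0 (by simpa using congrArg R6.c4 hc)
          · exact R6.mem_center _ (by simp) (by simp)
    · by_cases h0 : r.c0 = 0
      · refine ⟨⟨0,0,0,1,0,0⟩, R6.mem_center _ rfl rfl, ?_, ?_⟩
        · intro hc
          exact h1 (by simpa [h0] using congrArg R6.c4 hc)
        · exact R6.mem_center _ (by simp) (by simp)
      · refine ⟨⟨0,0,0,0,1,0⟩, R6.mem_center _ rfl rfl, ?_, ?_⟩
        · intro hc
          exact h0 (by simpa using congrArg R6.c4 hc)
        · exact R6.mem_center _ (by simp) (by simp)
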